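/- Let T be an arbitrary bounded linear operator on H = ℓ²(ℕ, ℂ). If s ∈ ℝ is such that for all t ∈ ℝ one has U_t ∘ exp(isT) ∘ U_{−t} = e^{−ist}·exp(isT), then s = 0. -/

import Mathlib

noncomputable section

open Complex
open scoped ENNReal NNReal

namespace GW

/-- The Hilbert space `H = ℓ²(ℕ, ℂ)`. -/
abbrev H : Type := lp (fun _ : ℕ => ℂ) 2

/-- The domain of the number operator: `{f ∈ H : Σ n² |c_n|² < ∞}`. -/
def domN : Set H := {f : H | Summable fun n : ℕ => (n : ℝ) ^ 2 * ‖f n‖ ^ 2}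

lemma Nop_memℓp {f : H} (hf : f ∈ domN) : Memℓp (fun n : ℕ => (n : ℂ) * f n) 2 := by
  apply memℓp_gen
  refine Summable.congr hf fun n => ?_
  have h2 : ((2 : ℝ≥0∞)).toReal = ((2 : ℕ) : ℝ) := by norm_num
  rw [h2, Real.rpow_natCast]
  simp [norm_mul, mul_pow]

/-- The number operator `N`, defined on its maximal domain `domN`: `(Nf)_n = n·c_n`. -/
def Nop (f : H) (hf : f ∈ domN) : H := ⟨fun n : ℕ => (n : ℂ) * f n, Nop_memℓp hf⟩

/-- The standard orthonormal basis `(e_n)` of `H`. -/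
def eH (n : ℕ) : H := lp.single 2 n (1 : ℂ)

lemma norm_exp_mul (x : ℝ) (c : ℂ) : ‖Complex.exp ((x : ℂ) * Complex.I) * c‖ = ‖c‖ := by
  rw [norm_mul, Complex.norm_exp_ofReal_mul_I, one_mul]

lemma U_memℓp (t : ℝ) (f : H) : Memℓp (fun n : ℕ => Complex.exp (((n * t : ℝ) : ℂ) * Complex.I) * f n) 2 := by
  apply memℓp_gen
  refine Summable.congr ((lp.memℓp f).summable (by norm_num)) fun n => ?_
  rw [norm_exp_mul]

/-- The unitary group `U_t = e^{itN}`: `(U_t f)_n = e^{int} f_n`, as a linear map. -/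
def Ulin (t : ℝ) : H →ₗ[ℂ] H where
  toFun f := ⟨fun n : ℕ => Complex.exp (((n * t : ℝ) : ℂ) * Complex.I) * f n, U_memℓp t f⟩
  map_add' f g := by
    apply Subtype.ext
    funext n
    show Complex.exp _ * (⇑(f + g)) n = _
    rw [lp.coeFn_add]
    show Complex.exp _ * (f n + g n) =
      Complex.exp _ * f n + Complex.exp _ * g n
    ring
  map_smul' c f := by
    apply Subtype.ext
    funext n
    show Complex.exp _ * (⇑(c • f)) n = _
    rw [lp.coeFn_smul]
    show Complex.exp _ * (c * f n) = c * (Complex.exp _ * f n)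
    ring

/-- The unitary group `U_t = e^{itN}`: `(U_t f)_n = e^{int} f_n`. -/
def U (t : ℝ) : H →L[ℂ] H :=
  LinearMap.mkContinuousOfExistsBound (Ulin t)
    ⟨1, fun f => by
      simp only [Ulin, LinearMap.coe_mk, AddHom.coe_mk, one_mul]
      apply le_of_eq
      rw [lp.norm_eq_tsum_rpow (by norm_num : 0 < (2 : ℝ≥0∞).toReal),
        lp.norm_eq_tsum_rpow (by norm_num : 0 < (2 : ℝ≥0∞).toReal) f]
      congr 1
      refine tsum_congr fun n => ?_
      show ‖Complex.exp (((n * t : ℝ) : ℂ) * Complex.I) * f n‖ ^ (2 : ℝ≥0∞).toReal = _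
      rw [norm_exp_mul]⟩

-- coordinate CLM
def coord (k : ℕ) : H →L[ℂ] ℂ :=
  LinearMap.mkContinuousOfExistsBound
    { toFun := fun f => f k
      map_add' := fun f g => by show (⇑(f+g)) k = _; rw [lp.coeFn_add]; rfl
      map_smul' := fun c f => by show (⇑(c • f)) k = _; rw [lp.coeFn_smul]; rfl }
    ⟨1, fun f => by simpa using lp.norm_apply_le_norm (by norm_num) f k⟩



lemma U_single (t : ℝ) (m : ℕ) :
    U t (eH m) = Complex.exp (((m * t : ℝ) : ℂ) * Complex.I) • eH m := by
  apply Subtype.ext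
  funext k
  show Complex.exp (((k * t : ℝ) : ℂ) * Complex.I) * (eH m) k = (⇑(_ • eH m)) k
  rw [lp.coeFn_smul]
  show _ = Complex.exp (((m * t : ℝ) : ℂ) * Complex.I) * (eH m) k
  rcases eq_or_ne k m with rfl | hk
  · rfl
  · have : (eH m) k = 0 := lp.single_apply_ne 2 m _ hk
    rw [this, mul_zero, mul_zero]


/-- Let `T` be an arbitrary bounded operator on `H = ℓ²(ℕ,ℂ)`. If `s ∈ ℝ` is
such that for all `t ∈ ℝ` one has `U_t ∘ exp(isT) ∘ U_{−t} = e^{−ist}·exp(isT)`, then `s = 0`. -/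
theorem weyl_relation_fails_bounded (T : H →L[ℂ] H) (s : ℝ)
    (h : ∀ t : ℝ,
      (U t) ∘L (NormedSpace.exp ((Complex.I * (s : ℂ)) • T)) ∘L (U (-t)) =
        Complex.exp (-(Complex.I * (s : ℂ) * (t : ℂ))) •
          NormedSpace.exp ((Complex.I * (s : ℂ)) • T)) :
    s = 0 := by
  set A := NormedSpace.exp ((Complex.I * (s : ℂ)) • T) with hA
  -- component relation
  have comp : ∀ (t : ℝ) (n m : ℕ),
      Complex.exp (((n * t : ℝ) : ℂ) * Complex.I) *
        (Complex.exp (((m * (-t) : ℝ) : ℂ) * Complex.I) * (A (eH m)) n) =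
      Complex.exp (-(Complex.I * (s : ℂ) * (t : ℂ))) * (A (eH m)) n := by
    intro t n m
    have h1 := DFunLike.congr_fun (h t) (eH m)
    have h2 : (U t) (A (U (-t) (eH m))) =
        Complex.exp (-(Complex.I * (s : ℂ) * (t : ℂ))) • (A (eH m)) := h1
    rw [U_single, map_smul, map_smul] at h2
    have h3 := congrFun (congrArg Subtype.val h2) n
    have h4 : (⇑(Complex.exp (((m * (-t) : ℝ) : ℂ) * Complex.I) • A (eH m))) n
        = Complex.exp (((m * (-t) : ℝ) : ℂ) * Complex.I) * (A (eH m)) n := by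
      rw [lp.coeFn_smul]; rfl
    have h5 : (⇑(Complex.exp (((m * (-t) : ℝ) : ℂ) * Complex.I) • (U t) (A (eH m)))) n
        = Complex.exp (((m * (-t) : ℝ) : ℂ) * Complex.I) *
          (Complex.exp (((n * t : ℝ) : ℂ) * Complex.I) * (A (eH m)) n) := by
      rw [lp.coeFn_smul]; rfl
    have h6 : (⇑(Complex.exp (-(Complex.I * (s : ℂ) * (t : ℂ))) • A (eH m))) n
        = Complex.exp (-(Complex.I * (s : ℂ) * (t : ℂ))) * (A (eH m)) n := by
      rw [lp.coeFn_smul]; rfl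
    rw [h5, h6] at h3
    rw [← h3]; ring
  have key : ∀ n m : ℕ, (A (eH m)) n ≠ 0 → (n : ℝ) - m + s = 0 := by
    intro n m hnm
    by_contra hr
    set r : ℝ := (n : ℝ) - m + s with hrdef
    have hall : ∀ t : ℝ, Complex.exp (((r * t : ℝ) : ℂ) * Complex.I) = 1 := by
      intro t
      have hc := comp t n m
      rw [← mul_assoc, ← Complex.exp_add] at hc
      have hc2 := mul_right_cancel₀ hnm hc
      have heq : (((r * t : ℝ) : ℂ) * Complex.I) =
          ((((n : ℝ) * t : ℝ) : ℂ) * Complex.I + (((m : ℝ) * (-t) : ℝ) : ℂ) * Complex.I)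
            - (-(Complex.I * (s : ℂ) * ((t : ℝ) : ℂ))) := by
        rw [hrdef]; push_cast; ring
      rw [heq, Complex.exp_sub, hc2, div_self (Complex.exp_ne_zero _)]
    have hc3 := hall (Real.pi / r)
    rw [mul_div_cancel₀ _ hr, Complex.exp_pi_mul_I] at hc3
    norm_num at hc3
  -- exp inverse facts
  have hinv : A ∘L NormedSpace.exp (-((Complex.I * (s : ℂ)) • T)) = 1 ∧
      NormedSpace.exp (-((Complex.I * (s : ℂ)) • T)) ∘L A = 1 := by
    letI : NormedAlgebra ℚ (H →L[ℂ] H) := .restrictScalars ℚ ℂ (H →L[ℂ] H)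
    constructor
    · have := (NormedSpace.exp_add_of_commute
        ((Commute.refl ((Complex.I * (s : ℂ)) • T)).neg_right)).symm
      rw [add_neg_cancel, NormedSpace.exp_zero] at this
      exact this
    · have := (NormedSpace.exp_add_of_commute
        ((Commute.refl ((Complex.I * (s : ℂ)) • T)).neg_left)).symm
      rw [neg_add_cancel, NormedSpace.exp_zero] at this
      exact this
  have he0 : (eH 0 : H) 0 = 1 := lp.single_apply_self 2 0 1
  rcases lt_trichotomy s 0 with hs | hs | hs
  · -- s < 0 : row 0 vanishes
    exfalso
    have hrow : ∀ m : ℕ, (A (eH m)) 0 = 0 := by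
      intro m
      by_contra hm
      have hk := key 0 m hm
      push_cast at hk
      have hm' : (0:ℝ) ≤ (m : ℝ) := Nat.cast_nonneg m
      linarith
    have hLf : ∀ f : H, ((coord 0) ∘L A) f = 0 := by
      intro f
      have hsum : HasSum (fun m : ℕ => lp.single 2 m (f m)) f :=
        lp.hasSum_single (by norm_num) f
      have hsum2 : HasSum (fun m : ℕ => ((coord 0) ∘L A) (lp.single 2 m (f m)))
          (((coord 0) ∘L A) f) := ((coord 0) ∘L A).hasSum hsum
      have hz : ∀ m : ℕ, ((coord 0) ∘L A) (lp.single 2 m (f m)) = 0 := by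
        intro m
        have : lp.single 2 m (f m) = f m • eH m := by
          rw [eH, ← lp.single_smul]
          norm_num
        rw [this, map_smul]
        show f m • (A (eH m)) 0 = 0
        rw [hrow m, smul_zero]
      rw [funext hz] at hsum2
      exact (hasSum_zero.unique hsum2).symm
    have := hLf (NormedSpace.exp (-((Complex.I * (s : ℂ)) • T)) (eH 0))
    rw [show ((coord 0) ∘L A) (NormedSpace.exp (-((Complex.I * (s : ℂ)) • T)) (eH 0))
        = ((coord 0) ∘L (A ∘L NormedSpace.exp (-((Complex.I * (s : ℂ)) • T)))) (eH 0) from rfl,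
      hinv.1] at this
    show False
    rw [show ((coord 0) ∘L (1 : H →L[ℂ] H)) (eH 0) = (eH 0 : H) 0 from rfl, he0] at this
    exact one_ne_zero this
  · exact hs
  · -- s > 0 : column 0 vanishes
    exfalso
    have hcol : A (eH 0) = 0 := by
      apply Subtype.ext
      funext n
      show (A (eH 0)) n = 0
      by_contra hn
      have := key n 0 hn
      have : (n : ℝ) + s = 0 := by push_cast at this ⊢; linarith
      have hn0 : (0:ℝ) ≤ (n : ℝ) := Nat.cast_nonneg n
      linarith
    have : (NormedSpace.exp (-((Complex.I * (s : ℂ)) • T)) ∘L A) (eH 0) = 0 := by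
      show NormedSpace.exp (-((Complex.I * (s : ℂ)) • T)) (A (eH 0)) = 0
      rw [hcol, map_zero]
    rw [hinv.2] at this
    have h1 : (eH 0 : H) = 0 := this
    rw [h1] at he0
    have hz : ((0 : H) : ℕ → ℂ) 0 = 0 := by rw [lp.coeFn_zero]; rfl
    rw [hz] at he0
    exact zero_ne_one he0


end GW
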